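/- Every element of the group PL_0(V) of piecewise linear paths has a unique minimal representative: a word (v_1, ..., v_n) over V such that all v_i are nonzero and every consecutive pair (v_i, v_{i+1}) is linearly independent. -/

import Mathlib

/-!
STATEMENT 1: Every element of the group `PL₀(V)` of piecewise linear paths has a
unique minimal representative: a word `(v₁, …, vₙ)` with all `vᵢ ≠ 0` and every
consecutive pair linearly independent.
-/

open FreeMonoid

variable (V : Type*) [AddCommGroup V] [Module ℝ V]

/-- The defining relations of `PL₀(V)`: `(v, w) ~ (v + w)` for linearly dependent
`v, w`, and `(0) ~ ε`. -/
inductive PLRel : FreeMonoid V → FreeMonoid V → Prop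
  | pair (v w : V) (h : ¬ LinearIndependent ℝ ![v, w]) :
      PLRel (of v * of w) (of (v + w))
  | zero : PLRel (of (0 : V)) 1

/-- The group (here: quotient monoid) `PL₀(V)` of piecewise linear paths. -/
abbrev PL0 := (conGen (PLRel V)).Quotient

variable {V}

/-- The quotient map `FMon(V) → PL₀(V)`. -/
abbrev PLmk : FreeMonoid V →* PL0 V := (conGen (PLRel V)).mk'

/-- A minimal word: all letters nonzero, consecutive letters linearly independent. -/
def IsMinWord (l : List V) : Prop :=
  (∀ v ∈ l, v ≠ 0) ∧ l.Chain' (fun v w => LinearIndependent ℝ ![v, w])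

/-! ### Auxiliary linear-independence lemmas -/

section Indep
variable {v w u : V}

lemma not_indep_smul (v : V) (a b : ℝ) : ¬ LinearIndependent ℝ ![a • v, b • v] := by
  rw [linearIndependent_fin2]
  rintro ⟨h1, h2⟩
  simp only [Matrix.cons_val_one, Matrix.head_cons, Matrix.cons_val_zero] at h1 h2
  have hb : b ≠ 0 := by rintro rfl; simp at h1
  exact h2 (a / b) (by rw [smul_smul, div_mul_cancel₀ _ hb])

lemma not_indep_smul_right (v : V) (a : ℝ) : ¬ LinearIndependent ℝ ![v, a • v] := by
  have := not_indep_smul v 1 a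
  rwa [one_smul] at this

lemma dep_iff (hv : v ≠ 0) (hw : w ≠ 0) :
    ¬ LinearIndependent ℝ ![v, w] ↔ ∃ c : ℝ, c ≠ 0 ∧ w = c • v := by
  rw [linearIndependent_fin2]
  simp only [Matrix.cons_val_one, Matrix.head_cons, Matrix.cons_val_zero]
  constructor
  · intro h
    push_neg at h
    obtain ⟨a, ha⟩ := h hw
    have ha' : a ≠ 0 := by rintro rfl; rw [zero_smul] at ha; exact hv ha.symm
    exact ⟨a⁻¹, inv_ne_zero ha', by rw [← ha, smul_smul, inv_mul_cancel₀ ha', one_smul]⟩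
  · rintro ⟨c, hc, rfl⟩ ⟨-, h2⟩
    exact h2 c⁻¹ (by rw [smul_smul, inv_mul_cancel₀ hc, one_smul])

lemma indep_smul_left {c : ℝ} (hc : c ≠ 0) (v u : V) :
    LinearIndependent ℝ ![c • v, u] ↔ LinearIndependent ℝ ![v, u] := by
  rw [linearIndependent_fin2, linearIndependent_fin2]
  simp only [Matrix.cons_val_one, Matrix.head_cons, Matrix.cons_val_zero]
  constructor
  · rintro ⟨h1, h2⟩
    exact ⟨h1, fun a ha => h2 (c * a) (by rw [mul_smul, ha])⟩
  · rintro ⟨h1, h2⟩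
    refine ⟨h1, fun a ha => h2 (c⁻¹ * a) ?_⟩
    rw [mul_smul, ha, smul_smul, inv_mul_cancel₀ hc, one_smul]

end Indep

/-! ### Normalization of words -/

open scoped Classical in
/-- Normalized cons: prepend a vector to a minimal word, keeping it minimal. -/
noncomputable def consM : V → List V → List V
  | v, [] => if v = 0 then [] else [v]
  | v, w :: t => if v = 0 then w :: t else
      if LinearIndependent ℝ ![v, w] then v :: w :: t else consM (v + w) t

section ConsM
variable {v w u : V} {t m M : List V}

lemma consM_zero (m : List V) : consM (0 : V) m = m := by
  cases m <;> simp [consM]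

lemma consM_nil (hv : v ≠ 0) : consM v ([] : List V) = [v] := by
  simp [consM, hv]

lemma consM_indep (hv : v ≠ 0) (h : LinearIndependent ℝ ![v, w]) :
    consM v (w :: t) = v :: w :: t := by
  simp [consM, hv, h]

lemma consM_dep (hv : v ≠ 0) (h : ¬ LinearIndependent ℝ ![v, w]) :
    consM v (w :: t) = consM (v + w) t := by
  simp [consM, hv, h]

lemma isMinWord_nil : IsMinWord ([] : List V) := ⟨by simp, List.isChain_nil⟩

lemma IsMinWord.tail' (h : IsMinWord (w :: t)) : IsMinWord t :=
  ⟨fun x hx => h.1 x (List.mem_cons_of_mem _ hx), h.2.tail⟩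

lemma consM_of_min (h : IsMinWord (v :: t)) : consM v t = v :: t := by
  have hv : v ≠ 0 := h.1 v List.mem_cons_self
  cases t with
  | nil => exact consM_nil hv
  | cons u t' => exact consM_indep hv (List.isChain_cons_cons.mp h.2).1

lemma min_consM (hm : IsMinWord m) (v : V) : IsMinWord (consM v m) := by
  induction m generalizing v with
  | nil =>
    by_cases hv : v = 0
    · subst hv; rw [consM_zero]; exact isMinWord_nil
    · rw [consM_nil hv]
      exact ⟨by simpa using hv, List.isChain_singleton _⟩
  | cons w t ih =>
    by_cases hv : v = 0
    · subst hv; rw [consM_zero]; exact hm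
    · by_cases h : LinearIndependent ℝ ![v, w]
      · rw [consM_indep hv h]
        refine ⟨?_, List.isChain_cons_cons.mpr ⟨h, hm.2⟩⟩
        intro x hx
        rcases List.mem_cons.mp hx with rfl | hx
        · exact hv
        · exact hm.1 x hx
      · rw [consM_dep hv h]
        exact ih hm.tail' (v + w)

/-- The key "local confluence" lemma. -/
lemma consM_consM (hv : v ≠ 0) (hd : ¬ LinearIndependent ℝ ![v, w]) (hM : IsMinWord M) :
    consM v (consM w M) = consM (v + w) M := by
  by_cases hw : w = 0
  · subst hw; rw [consM_zero, add_zero]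
  obtain ⟨c, hc, hwc⟩ := (dep_iff hv hw).mp hd
  cases M with
  | nil => rw [consM_nil hw, consM_dep hv hd]
  | cons u t =>
    have hu : u ≠ 0 := hM.1 u List.mem_cons_self
    have ht : IsMinWord t := hM.tail'
    by_cases hwu : LinearIndependent ℝ ![w, u]
    · rw [consM_indep hw hwu, consM_dep hv hd]
    obtain ⟨d, hdne, hud⟩ := (dep_iff hw hu).mp hwu
    have hu' : u = (d * c) • v := by rw [hud, hwc, smul_smul]
    have hdc : d * c ≠ 0 := mul_ne_zero hdne hc
    have hvw : v + w = (1 + c) • v := by rw [hwc, add_smul, one_smul]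
    have hwu0 : w + u = ((1 + d) * c) • v := by
      rw [hwc, hu', ← add_smul]
      ring_nf
    have hdep_v_wu : ¬ LinearIndependent ℝ ![v, w + u] := by
      rw [hwu0]; exact not_indep_smul_right v _
    rw [consM_dep hw hwu]
    by_cases h1 : v + w = 0
    · rw [h1, consM_zero]
      have hveq : v = -w := eq_neg_of_add_eq_zero_left h1
      by_cases h2 : w + u = 0
      · rw [h2, consM_zero]
        have huv : u = v := by
          rw [eq_neg_of_add_eq_zero_right h2, hveq]
        subst huv
        exact consM_of_min hM
      · have hs : (1 + d) * c ≠ 0 := fun h => h2 (by rw [hwu0, h, zero_smul])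
        have hsum : v + (w + u) = u := by rw [← add_assoc, h1, zero_add]
        cases t with
        | nil =>
          rw [consM_nil h2, consM_dep hv hdep_v_wu, hsum, consM_nil hu]
        | cons u' t' =>
          have hind : LinearIndependent ℝ ![u, u'] := (List.isChain_cons_cons.mp hM.2).1
          have hwu_u : w + u = (((1 + d) * c) / (d * c)) • u := by
            rw [hwu0, hu', smul_smul, div_mul_cancel₀ _ hdc]
          have hind' : LinearIndependent ℝ ![w + u, u'] := by
            rw [hwu_u, indep_smul_left (div_ne_zero hs hdc)]
            exact hind
          rw [consM_indep h2 hind', consM_dep hv hdep_v_wu, hsum,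
            consM_indep hu hind]
    · have hdep_vw_u : ¬ LinearIndependent ℝ ![v + w, u] := by
        rw [hvw, hu']; exact not_indep_smul v _ _
      rw [consM_dep h1 hdep_vw_u]
      by_cases h2 : w + u = 0
      · rw [h2, consM_zero]
        have : v + w + u = v := by rw [add_assoc, h2, add_zero]
        rw [this]
      · have hs : (1 + d) * c ≠ 0 := fun h => h2 (by rw [hwu0, h, zero_smul])
        cases t with
        | nil =>
          rw [consM_nil h2, consM_dep hv hdep_v_wu, add_assoc]
        | cons u' t' =>
          have hind : LinearIndependent ℝ ![u, u'] := (List.isChain_cons_cons.mp hM.2).1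
          have hwu_u : w + u = (((1 + d) * c) / (d * c)) • u := by
            rw [hwu0, hu', smul_smul, div_mul_cancel₀ _ hdc]
          have hind' : LinearIndependent ℝ ![w + u, u'] := by
            rw [hwu_u, indep_smul_left (div_ne_zero hs hdc)]
            exact hind
          rw [consM_indep h2 hind', consM_dep hv hdep_v_wu, add_assoc]

end ConsM

/-- The normal form of a word. -/
noncomputable def normL (l : List V) : List V := l.foldr consM []

lemma normL_nil : normL ([] : List V) = [] := rfl

lemma normL_cons (v : V) (t : List V) : normL (v :: t) = consM v (normL t) := rfl

lemma min_foldr {m : List V} (hm : IsMinWord m) (l : List V) :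
    IsMinWord (l.foldr consM m) := by
  induction l with
  | nil => exact hm
  | cons v t ih => exact min_consM ih v

lemma normL_min (l : List V) : IsMinWord (normL l) := min_foldr isMinWord_nil l

lemma normL_eq_of_min {l : List V} (h : IsMinWord l) : normL l = l := by
  induction l with
  | nil => rfl
  | cons v t ih =>
    rw [normL_cons, ih h.tail']
    exact consM_of_min h

lemma foldr_consM {m : List V} (hm : IsMinWord m) (l : List V) (v : V) :
    (consM v l).foldr consM m = consM v (l.foldr consM m) := by
  induction l generalizing v with
  | nil =>
    by_cases hv : v = 0
    · subst hv; rw [consM_zero, consM_zero]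
    · rw [consM_nil hv]; rfl
  | cons w t ih =>
    by_cases hv : v = 0
    · subst hv; rw [consM_zero, consM_zero]
    · by_cases h : LinearIndependent ℝ ![v, w]
      · rw [consM_indep hv h]; rfl
      · rw [consM_dep hv h, ih (v + w), List.foldr_cons]
        exact (consM_consM hv h (min_foldr hm t)).symm

lemma foldr_normL {m : List V} (hm : IsMinWord m) (l : List V) :
    (normL l).foldr consM m = l.foldr consM m := by
  induction l with
  | nil => rfl
  | cons v t ih =>
    rw [normL_cons, foldr_consM hm, ih, List.foldr_cons]

/-! ### The congruence defined by equal normal forms -/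

/-- The congruence relation "same normal form". -/
noncomputable def normCon : Con (FreeMonoid V) where
  r a b := normL (toList a) = normL (toList b)
  iseqv := ⟨fun _ => rfl, Eq.symm, Eq.trans⟩
  mul' {a b c d} h1 h2 := by
    show normL (toList (a * c)) = normL (toList (b * d))
    rw [toList_mul, toList_mul]
    show (toList a ++ toList c).foldr consM [] = (toList b ++ toList d).foldr consM []
    rw [List.foldr_append, List.foldr_append]
    show (toList a).foldr consM (normL (toList c)) =
      (toList b).foldr consM (normL (toList d))
    rw [h2, ← foldr_normL (normL_min (toList d)) (toList a), h1,
      foldr_normL (normL_min (toList d)) (toList b)]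

lemma conGen_le_normCon : conGen (PLRel V) ≤ normCon := by
  apply Con.conGen_le.mpr
  rintro x y (⟨v, w, h⟩ | _)
  · show normL (toList (of v * of w)) = normL (toList (of (v + w)))
    rw [toList_mul, toList_of, toList_of]
    show consM v (consM w []) = consM (v + w) []
    by_cases hv : v = 0
    · subst hv; rw [consM_zero, zero_add]
    · exact consM_consM hv h isMinWord_nil
  · show normL (toList (of (0 : V))) = normL (toList (1 : FreeMonoid V))
    rw [toList_of]
    show consM (0 : V) [] = normL (toList (1 : FreeMonoid V))
    rw [consM_zero]
    rfl

/-! ### Compatibility of normalization with the quotient map -/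

lemma PLmk_of_zero : PLmk (of (0 : V)) = 1 := by
  have h : (conGen (PLRel V)) (of (0 : V)) 1 := ConGen.Rel.of _ _ PLRel.zero
  exact (Con.eq _).mpr h

lemma PLmk_pair {v w : V} (h : ¬ LinearIndependent ℝ ![v, w]) :
    PLmk (of v) * PLmk (of w) = PLmk (of (v + w)) := by
  have h' : (conGen (PLRel V)) (of v * of w) (of (v + w)) :=
    ConGen.Rel.of _ _ (PLRel.pair v w h)
  rw [← map_mul]
  exact (Con.eq _).mpr h'

lemma PLmk_consM (m : List V) (v : V) :
    PLmk (ofList (consM v m)) = PLmk (of v) * PLmk (ofList m) := by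
  induction m generalizing v with
  | nil =>
    by_cases hv : v = 0
    · subst hv
      rw [consM_zero, PLmk_of_zero, one_mul]
    · rw [consM_nil hv, ofList_cons, map_mul]
  | cons w t ih =>
    by_cases hv : v = 0
    · subst hv
      rw [consM_zero, PLmk_of_zero, one_mul]
    · by_cases h : LinearIndependent ℝ ![v, w]
      · rw [consM_indep hv h, ofList_cons, map_mul]
      · rw [consM_dep hv h, ih, ← PLmk_pair h, ofList_cons, map_mul, mul_assoc]

lemma PLmk_normL (l : List V) : PLmk (ofList (normL l)) = PLmk (ofList l) := by
  induction l with
  | nil => rfl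
  | cons v t ih =>
    rw [normL_cons, PLmk_consM, ih, ofList_cons, map_mul]

/-- Unique minimal representatives in `PL₀(V)`. -/
theorem PL0_exists_unique_minimal_representative [FiniteDimensional ℝ V] (x : PL0 V) :
    ∃! l : List V, IsMinWord l ∧ PLmk (FreeMonoid.ofList l) = x := by
  obtain ⟨w, rfl⟩ := Quotient.exists_rep x
  have hw : PLmk (ofList (normL (toList w))) = ⟦w⟧ := by
    rw [PLmk_normL, ofList_toList]
    rfl
  refine ⟨normL (toList w), ⟨normL_min _, hw⟩, ?_⟩
  rintro l' ⟨hmin, heq⟩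
  have hrel : (conGen (PLRel V)) (ofList l') (ofList (normL (toList w))) :=
    (Con.eq _).mp (heq.trans hw.symm)
  have hnc := (Con.le_def.mp conGen_le_normCon) hrel
  have h3 : normL l' = normL (normL (toList w)) := hnc
  rw [normL_eq_of_min hmin, normL_eq_of_min (normL_min _)] at h3
  exact h3
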